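/- For the classical Ising chain Hamiltonian H = -h₁σ₁^z - ∑_{i=1}^{n-1} σᵢ^z σ_{i+1}^z on n qubits, the reduced Gibbs state at inverse temperature β on site i equals ½I + ½ tanh^{i-1}(β) tanh(h₁β) σᵢ^z; in particular it depends on h₁ for every site i. -/

import Mathlib

open Matrix Complex

noncomputable section

/-- Pauli X matrix. -/
def σx : Matrix (Fin 2) (Fin 2) ℂ := !![0, 1; 1, 0]
/-- Pauli Y matrix. -/
def σy : Matrix (Fin 2) (Fin 2) ℂ := !![0, -Complex.I; Complex.I, 0]
/-- Pauli Z matrix. -/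
def σz : Matrix (Fin 2) (Fin 2) ℂ := !![1, 0; 0, -1]

/-- The one-site operator `P` acting on site `i` of a collection of qubits
indexed by `ι` (identity on all other sites). -/
def pauliAt {ι : Type} [Fintype ι] [DecidableEq ι] (i : ι)
    (P : Matrix (Fin 2) (Fin 2) ℂ) : Matrix (ι → Fin 2) (ι → Fin 2) ℂ :=
  fun v w => if ∀ j, j ≠ i → v j = w j then P (v i) (w i) else 0

/-- The tensor product `⨂ i, η i` of one-qubit operators, as a matrix on the
full Hilbert space of the qubits indexed by `ι`. -/
def tensorPauli {ι : Type} [Fintype ι] [DecidableEq ι]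
    (η : ι → Matrix (Fin 2) (Fin 2) ℂ) : Matrix (ι → Fin 2) (ι → Fin 2) ℂ :=
  fun v w => ∏ i, η i (v i) (w i)

/-- Partial trace over the sites satisfying `p`; the result is an operator on
the qubits at the remaining sites. -/
def traceOut {ι : Type} [Fintype ι] [DecidableEq ι] (p : ι → Prop) [DecidablePred p]
    (M : Matrix (ι → Fin 2) (ι → Fin 2) ℂ) :
    Matrix ({i // ¬ p i} → Fin 2) ({i // ¬ p i} → Fin 2) ℂ :=
  fun v w => ∑ u : {i : ι // p i} → Fin 2,
    M (fun i => if h : p i then u ⟨i, h⟩ else v ⟨i, h⟩)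
      (fun i => if h : p i then u ⟨i, h⟩ else w ⟨i, h⟩)

/-- The classical Ising chain Hamiltonian
`H = -h₁ σ₁^z - ∑_{i=1}^{n-1} σᵢ^z σ_{i+1}^z` on `n = K + 1` qubits. -/
def classicalH (K : ℕ) (h₁ : ℝ) :
    Matrix (Fin (K + 1) → Fin 2) (Fin (K + 1) → Fin 2) ℂ :=
  -((h₁ : ℂ) • pauliAt (0 : Fin (K + 1)) σz)
    - ∑ i : Fin K, pauliAt i.castSucc σz * pauliAt i.succ σz


namespace IsingAux

def sgn (x : Fin 2) : ℂ := if x = 0 then 1 else -1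

lemma sgn_zero : sgn 0 = 1 := rfl
lemma sgn_one : sgn 1 = -1 := rfl

lemma sgn_sq (x : Fin 2) : sgn x * sgn x = 1 := by
  fin_cases x <;> simp [sgn]

lemma sgn_add (x y : Fin 2) : sgn (x + y) = sgn x * sgn y := by
  fin_cases x <;> fin_cases y <;> simp [sgn]

lemma σz_apply (a b : Fin 2) : σz a b = if a = b then sgn a else 0 := by
  fin_cases a <;> fin_cases b <;> simp [σz, sgn]

lemma σz_apply_ne {a b : Fin 2} (h : a ≠ b) : σz a b = 0 := by
  rw [σz_apply, if_neg h]

lemma sgn_sum {α : Type*} (s : Finset α) (f : α → Fin 2) :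
    sgn (∑ k ∈ s, f k) = ∏ k ∈ s, sgn (f k) := by
  induction s using Finset.cons_induction with
  | empty => simp [sgn]
  | cons a s ha ih => rw [Finset.sum_cons, Finset.prod_cons, sgn_add, ih]

lemma pauliAt_σz {ι : Type} [Fintype ι] [DecidableEq ι] (i : ι) :
    pauliAt i σz = Matrix.diagonal (fun v => sgn (v i)) := by
  ext v w
  rw [pauliAt, Matrix.diagonal_apply]
  by_cases h : ∀ j, j ≠ i → v j = w j
  · rw [if_pos h]
    by_cases hvw : v = w
    · subst hvw; rw [if_pos rfl, σz_apply, if_pos rfl]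
    · rw [if_neg hvw, σz_apply_ne]
      intro hvi
      exact hvw (funext fun j => by
        rcases eq_or_ne j i with rfl | hj
        · exact hvi
        · exact h j hj)
  · rw [if_neg h, if_neg]
    intro hvw; exact h fun j _ => congrFun hvw j

/-- classical energy -/
def Eng (K : ℕ) (h₁ : ℝ) (v : Fin (K + 1) → Fin 2) : ℂ :=
  -((h₁ : ℂ) * sgn (v 0)) - ∑ k : Fin K, sgn (v k.castSucc) * sgn (v k.succ)

lemma classicalH_eq (K : ℕ) (h₁ : ℝ) :
    classicalH K h₁ = Matrix.diagonal (Eng K h₁) := by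
  funext v w
  simp only [classicalH, pauliAt_σz, Matrix.diagonal_mul_diagonal, Matrix.sub_apply,
    Matrix.neg_apply, Matrix.smul_apply, Matrix.sum_apply, Matrix.diagonal_apply,
    smul_eq_mul, Pi.smul_apply]
  by_cases h : v = w
  · subst h
    simp [Eng]
  · simp [h]

/-- Boltzmann weight -/
def G (K : ℕ) (h₁ β : ℝ) (v : Fin (K + 1) → Fin 2) : ℂ :=
  Complex.exp ((β : ℂ) * h₁ * sgn (v 0)) *
    ∏ k : Fin K, Complex.exp ((β : ℂ) * (sgn (v k.castSucc) * sgn (v k.succ)))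

lemma exp_neg_beta_Eng (K : ℕ) (h₁ β : ℝ) (v : Fin (K + 1) → Fin 2) :
    Complex.exp ((-(β : ℂ)) * Eng K h₁ v) = G K h₁ β v := by
  have h : (-(β : ℂ)) * Eng K h₁ v
      = (β : ℂ) * h₁ * sgn (v 0)
        + ∑ k : Fin K, (β : ℂ) * (sgn (v k.castSucc) * sgn (v k.succ)) := by
    rw [Eng, ← Finset.mul_sum]; ring
  rw [h, Complex.exp_add, Complex.exp_sum, G]

lemma exp_matrix (K : ℕ) (h₁ β : ℝ) :
    NormedSpace.exp ((-(β : ℂ)) • classicalH K h₁) = Matrix.diagonal (G K h₁ β) := by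
  rw [classicalH_eq, ← Matrix.diagonal_smul, Matrix.exp_diagonal]
  refine congrArg Matrix.diagonal (funext fun v => ?_)
  rw [Pi.coe_exp, ← Complex.exp_eq_exp_ℂ, Pi.smul_apply, smul_eq_mul, exp_neg_beta_Eng]


section CoV

variable {K : ℕ}

lemma Iic_zero : Finset.Iic (0 : Fin (K + 1)) = {0} := by
  ext j; simp [Fin.le_zero_iff]

lemma Iic_succ (k : Fin K) :
    Finset.Iic k.succ = insert k.succ (Finset.Iic k.castSucc) := by
  ext j
  simp only [Finset.mem_Iic, Finset.mem_insert, Fin.le_def, Fin.ext_iff, Fin.val_succ,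
    Fin.coe_castSucc]
  omega

lemma succ_not_mem_Iic (k : Fin K) : k.succ ∉ Finset.Iic k.castSucc := by
  simp [Fin.le_def]

/-- change of variables: domain-wall variables to spins -/
def Phi (K : ℕ) (τ : Fin (K + 1) → Fin 2) : Fin (K + 1) → Fin 2 :=
  fun j => ∑ k ∈ Finset.Iic j, τ k

lemma Phi_zero (τ : Fin (K + 1) → Fin 2) : Phi K τ 0 = τ 0 := by
  rw [Phi, Iic_zero, Finset.sum_singleton]

lemma Phi_succ (τ : Fin (K + 1) → Fin 2) (k : Fin K) :
    Phi K τ k.succ = τ k.succ + Phi K τ k.castSucc := by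
  rw [Phi, Phi, Iic_succ, Finset.sum_insert (succ_not_mem_Iic k)]

/-- spins to domain-wall variables -/
def Psi (K : ℕ) (v : Fin (K + 1) → Fin 2) : Fin (K + 1) → Fin 2 :=
  fun j => Fin.cases (v 0) (fun k => v k.succ - v k.castSucc) j

def PhiEquiv (K : ℕ) : (Fin (K + 1) → Fin 2) ≃ (Fin (K + 1) → Fin 2) where
  toFun := Phi K
  invFun := Psi K
  left_inv := by
    intro τ
    funext j
    induction j using Fin.cases with
    | zero => rw [Psi]; simp only [Fin.cases_zero]; exact Phi_zero τ
    | succ k =>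
      rw [Psi]; simp only [Fin.cases_succ]
      rw [Phi_succ, add_sub_cancel_right]
  right_inv := by
    intro v
    funext j
    induction j using Fin.induction with
    | zero => rw [Phi_zero]; simp [Psi]
    | succ k ih =>
      rw [Phi_succ, show Psi K v k.succ = v k.succ - v k.castSucc from rfl, ih,
        sub_add_cancel]

/-- local fields -/
def xval (K : ℕ) (h₁ β : ℝ) (j : Fin (K + 1)) : ℝ :=
  if j = 0 then β * h₁ else β

/-- one-site Boltzmann factor -/
def fac (K : ℕ) (h₁ β : ℝ) (j : Fin (K + 1)) (t : Fin 2) : ℂ :=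
  Complex.exp ((xval K h₁ β j : ℂ) * sgn t)

lemma G_Phi (h₁ β : ℝ) (τ : Fin (K + 1) → Fin 2) :
    G K h₁ β (Phi K τ) = ∏ j : Fin (K + 1), fac K h₁ β j (τ j) := by
  rw [Fin.prod_univ_succ, G, Phi_zero]
  congr 1
  · rw [fac, xval, if_pos rfl]; push_cast; ring_nf
  · refine Finset.prod_congr rfl fun k _ => ?_
    rw [fac, xval, if_neg (Fin.succ_ne_zero k), Phi_succ, sgn_add]
    congr 1
    rw [show sgn (Phi K τ k.castSucc) * (sgn (τ k.succ) * sgn (Phi K τ k.castSucc))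
      = sgn (τ k.succ) * (sgn (Phi K τ k.castSucc) * sgn (Phi K τ k.castSucc)) by ring,
      sgn_sq, mul_one]

lemma sgn_Phi (τ : Fin (K + 1) → Fin 2) (i : Fin (K + 1)) :
    sgn (Phi K τ i) = ∏ j : Fin (K + 1), (if j ≤ i then sgn (τ j) else 1) := by
  rw [Phi, sgn_sum, ← Finset.prod_filter]
  congr 1
  ext j; simp

end CoV

section Sums

variable {K : ℕ}

/-- 2cosh -/
def cA (x : ℝ) : ℂ := Complex.exp x + Complex.exp (-x)
/-- 2sinh -/
def sA (x : ℝ) : ℂ := Complex.exp x - Complex.exp (-x)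

lemma cA_eq (x : ℝ) : cA x = ((Real.exp x + Real.exp (-x) : ℝ) : ℂ) := by
  rw [cA]; push_cast [Complex.ofReal_exp]; try rfl

lemma cA_ne_zero (x : ℝ) : cA x ≠ 0 := by
  rw [cA_eq]
  exact_mod_cast ne_of_gt (by positivity : (0:ℝ) < Real.exp x + Real.exp (-x))

lemma sA_eq_tanh_mul (x : ℝ) : sA x = (Real.tanh x : ℂ) * cA x := by
  rw [cA_eq, sA, ← Complex.ofReal_exp, ← Complex.ofReal_neg, ← Complex.ofReal_exp]
  have : Real.tanh x * (Real.exp x + Real.exp (-x)) = Real.exp x - Real.exp (-x) := by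
    rw [Real.tanh_eq_sinh_div_cosh, Real.sinh_eq, Real.cosh_eq]
    have h := (Real.cosh_pos x).ne'
    rw [Real.cosh_eq] at h
    field_simp
  exact_mod_cast congrArg (fun r : ℝ => (r : ℂ)) this.symm

lemma sum_fac (x : ℝ) : ∑ t : Fin 2, Complex.exp ((x : ℂ) * sgn t) = cA x := by
  rw [Fin.sum_univ_two, sgn_zero, sgn_one, mul_one, cA]
  norm_num

lemma sum_sgn_fac (x : ℝ) :
    ∑ t : Fin 2, sgn t * Complex.exp ((x : ℂ) * sgn t) = sA x := by
  rw [Fin.sum_univ_two, sgn_zero, sgn_one, mul_one, one_mul, sA]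
  ring_nf

/-- one-site factor with magnetization insertion -/
def gfac (K : ℕ) (h₁ β : ℝ) (i j : Fin (K + 1)) (t : Fin 2) : ℂ :=
  (if j ≤ i then sgn t else 1) * fac K h₁ β j t

/-- partition function -/
def Z (K : ℕ) (h₁ β : ℝ) : ℂ := ∑ v : Fin (K + 1) → Fin 2, G K h₁ β v

/-- magnetization sum -/
def Zm (K : ℕ) (h₁ β : ℝ) (i : Fin (K + 1)) : ℂ :=
  ∑ v : Fin (K + 1) → Fin 2, sgn (v i) * G K h₁ β v

lemma Z_eq (h₁ β : ℝ) : Z K h₁ β = ∏ j : Fin (K + 1), cA (xval K h₁ β j) := by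
  rw [Z, ← Equiv.sum_comp (PhiEquiv K)]
  simp_rw [show ⇑(PhiEquiv K) = Phi K from rfl, G_Phi]
  rw [← Fintype.piFinset_univ, ← Finset.prod_univ_sum]
  exact Finset.prod_congr rfl fun j _ => sum_fac _

lemma Zm_eq (h₁ β : ℝ) (i : Fin (K + 1)) :
    Zm K h₁ β i = ∏ j : Fin (K + 1),
      (if j ≤ i then sA (xval K h₁ β j) else cA (xval K h₁ β j)) := by
  rw [Zm, ← Equiv.sum_comp (PhiEquiv K)]
  simp_rw [show ⇑(PhiEquiv K) = Phi K from rfl, G_Phi, sgn_Phi, ← Finset.prod_mul_distrib,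
    show ∀ j t, (if j ≤ i then sgn t else 1) * fac K h₁ β j t = gfac K h₁ β i j t
      from fun _ _ => rfl]
  rw [← Fintype.piFinset_univ, ← Finset.prod_univ_sum]
  refine Finset.prod_congr rfl fun j _ => ?_
  by_cases hj : j ≤ i
  · simp only [gfac, if_pos hj]
    exact sum_sgn_fac _
  · simp only [gfac, if_neg hj, one_mul]
    exact sum_fac _

lemma Z_ne_zero (h₁ β : ℝ) : Z K h₁ β ≠ 0 := by
  rw [Z_eq]
  exact Finset.prod_ne_zero_iff.mpr fun j _ => cA_ne_zero _

lemma card_filter_lt (K m : ℕ) (hm : m ≤ K) :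
    (Finset.univ.filter (fun k : Fin K => (k : ℕ) < m)).card = m := by
  have : Finset.univ.filter (fun k : Fin K => (k : ℕ) < m)
      = Finset.map ⟨fun x : Fin m => ⟨x, lt_of_lt_of_le x.2 hm⟩,
          fun a b h => by simpa [Fin.ext_iff] using congrArg Fin.val h⟩ Finset.univ := by
    ext k
    simp only [Finset.mem_filter, Finset.mem_univ, true_and, Finset.mem_map,
      Function.Embedding.coeFn_mk]
    constructor
    · intro h; exact ⟨⟨k, h⟩, rfl⟩
    · rintro ⟨x, rfl⟩; exact x.2
  rw [this, Finset.card_map, Finset.card_univ, Fintype.card_fin]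

lemma Zm_eq_tanh (h₁ β : ℝ) (i : Fin (K + 1)) :
    Zm K h₁ β i = ((Real.tanh (h₁ * β) : ℂ) * (Real.tanh β : ℂ) ^ (i : ℕ)) * Z K h₁ β := by
  rw [Zm_eq, Z_eq]
  have key : ∀ j : Fin (K + 1),
      (if j ≤ i then sA (xval K h₁ β j) else cA (xval K h₁ β j))
      = (if j ≤ i then (Real.tanh (xval K h₁ β j) : ℂ) else 1) * cA (xval K h₁ β j) := by
    intro j
    by_cases hj : j ≤ i
    · rw [if_pos hj, if_pos hj, sA_eq_tanh_mul]
    · rw [if_neg hj, if_neg hj, one_mul]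
  simp_rw [key]
  rw [Finset.prod_mul_distrib]
  congr 1
  rw [Fin.prod_univ_succ, if_pos (Fin.zero_le i),
    show xval K h₁ β 0 = β * h₁ from if_pos rfl, mul_comm β h₁]
  congr 1
  have h2 : ∀ k : Fin K,
      (if k.succ ≤ i then (Real.tanh (xval K h₁ β k.succ) : ℂ) else 1)
      = (if (k : ℕ) < (i : ℕ) then (Real.tanh β : ℂ) else 1) := by
    intro k
    have hiff : k.succ ≤ i ↔ (k : ℕ) < (i : ℕ) := by
      rw [Fin.le_def]
      simp only [Fin.val_succ]
      omega
    rw [show xval K h₁ β k.succ = β from if_neg (Fin.succ_ne_zero k)]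
    simp only [hiff]
  simp_rw [h2]
  rw [← Finset.prod_filter, Finset.prod_const,
    card_filter_lt K (i : ℕ) (Nat.lt_succ_iff.mp i.isLt)]

end Sums

section Trace

variable {K : ℕ}

/-- embed a configuration of the complement of `i` plus a value at `i` -/
def emb (i : Fin (K + 1)) (u : {j : Fin (K + 1) // j ≠ i} → Fin 2) (a : Fin 2) :
    Fin (K + 1) → Fin 2 :=
  fun j => if h : j ≠ i then u ⟨j, h⟩ else a

lemma emb_apply_i (i : Fin (K + 1)) (u : {j : Fin (K + 1) // j ≠ i} → Fin 2) (a : Fin 2) :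
    emb i u a i = a := by
  simp only [emb, dif_neg (by simp : ¬ i ≠ i)]

lemma one_add_sgn_mul (a b : Fin 2) : (1 : ℂ) + sgn a * sgn b = if b = a then 2 else 0 := by
  fin_cases a <;> fin_cases b <;> simp [sgn] <;> norm_num

/-- splitting a configuration into the value at `i` and the rest -/
def Theta (i : Fin (K + 1)) :
    ({j : Fin (K + 1) // j ≠ i} → Fin 2) × Fin 2 ≃ (Fin (K + 1) → Fin 2) where
  toFun x := emb i x.1 x.2
  invFun v := (fun j => v j, v i)
  left_inv := by
    rintro ⟨u, a⟩
    refine Prod.ext ?_ (emb_apply_i i u a)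
    funext j
    simp only [emb, dif_pos j.2, Subtype.coe_eta]
  right_inv := by
    intro v
    funext j
    by_cases h : j ≠ i
    · simp only [emb, dif_pos h]
    · simp only [emb, dif_neg h]
      rw [not_not] at h
      rw [h]

/-- conditional partition function -/
def T (K : ℕ) (h₁ β : ℝ) (i : Fin (K + 1)) (a : Fin 2) : ℂ :=
  ∑ u : {j : Fin (K + 1) // j ≠ i} → Fin 2, G K h₁ β (emb i u a)

lemma two_T (h₁ β : ℝ) (i : Fin (K + 1)) (a : Fin 2) :
    2 * T K h₁ β i a = Z K h₁ β + sgn a * Zm K h₁ β i := by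
  have key : ∀ v : Fin (K + 1) → Fin 2,
      G K h₁ β v + sgn a * (sgn (v i) * G K h₁ β v)
        = (if v i = a then 2 else 0) * G K h₁ β v := by
    intro v
    rw [← one_add_sgn_mul a (v i)]
    ring
  rw [Z, Zm, Finset.mul_sum, ← Finset.sum_add_distrib]
  simp_rw [key]
  rw [← Equiv.sum_comp (Theta i)]
  simp_rw [show ∀ x, (Theta i) x = emb i x.1 x.2 from fun _ => rfl]
  rw [Fintype.sum_prod_type]
  simp_rw [emb_apply_i, ite_mul, zero_mul]
  simp only [Finset.sum_ite_eq', Finset.mem_univ, if_true]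
  rw [T, Finset.mul_sum]

lemma traceOut_diag (h₁ β : ℝ) (i : Fin (K + 1)) (hi : ¬ i ≠ i)
    (v w : {j : Fin (K + 1) // ¬ j ≠ i} → Fin 2) :
    traceOut (fun j : Fin (K + 1) => j ≠ i) (Matrix.diagonal (G K h₁ β)) v w
      = if v ⟨i, hi⟩ = w ⟨i, hi⟩ then T K h₁ β i (v ⟨i, hi⟩) else 0 := by
  have hgen : ∀ (x : {j : Fin (K + 1) // ¬ j ≠ i} → Fin 2)
      (u : {j : Fin (K + 1) // j ≠ i} → Fin 2),
      (fun j => if h : j ≠ i then u ⟨j, h⟩ else x ⟨j, h⟩) = emb i u (x ⟨i, hi⟩) := by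
    intro x u
    funext j
    by_cases h : j ≠ i
    · simp only [emb, dif_pos h]
    · simp only [emb, dif_neg h]
      have hj : j = i := not_not.mp h
      subst hj
      rfl
  rw [traceOut]
  simp_rw [hgen]
  by_cases hvw : v ⟨i, hi⟩ = w ⟨i, hi⟩
  · rw [if_pos hvw, ← hvw, T]
    exact Finset.sum_congr rfl fun u _ => Matrix.diagonal_apply_eq _ _
  · rw [if_neg hvw]
    refine Finset.sum_eq_zero fun u _ => Matrix.diagonal_apply_ne _ ?_
    intro hc
    exact hvw (by simpa [emb_apply_i] using congrFun hc i)

end Trace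

lemma main_scalar {K : ℕ} (h₁ β : ℝ) (i : Fin (K + 1)) (a : Fin 2) :
    (Z K h₁ β)⁻¹ * T K h₁ β i a
      = 1 / 2 + (1 / 2 * ((Real.tanh β : ℂ) ^ (i : ℕ)) * (Real.tanh (h₁ * β) : ℂ)) * sgn a := by
  have hZ := Z_ne_zero (K := K) h₁ β
  have h2 := two_T h₁ β i a
  rw [Zm_eq_tanh] at h2
  rw [inv_mul_eq_div, div_eq_iff hZ]
  linear_combination h2 / 2

end IsingAux

open IsingAux

theorem classical_ising_reduced_state (K : ℕ) (h₁ : ℝ) (β : ℝ) (i : Fin (K + 1)) :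
    (Matrix.trace (NormedSpace.exp ((-(β : ℂ)) • classicalH K h₁)))⁻¹ •
        traceOut (fun j : Fin (K + 1) => j ≠ i)
          (NormedSpace.exp ((-(β : ℂ)) • classicalH K h₁)) =
      (1 / 2 : ℂ) • (1 : Matrix ({j : Fin (K + 1) // ¬ j ≠ i} → Fin 2)
          ({j : Fin (K + 1) // ¬ j ≠ i} → Fin 2) ℂ)
        + ((1 / 2 : ℂ) * ((Real.tanh β : ℂ) ^ (i : ℕ)) * (Real.tanh (h₁ * β) : ℂ)) •
          pauliAt (⟨i, by simp⟩ : {j : Fin (K + 1) // ¬ j ≠ i}) σz := by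
  have hi : ¬ i ≠ i := fun h => h rfl
  haveI : Subsingleton {j : Fin (K + 1) // ¬ j ≠ i} :=
    ⟨fun a b => Subtype.ext ((not_not.mp a.2).trans (not_not.mp b.2).symm)⟩
  rw [exp_matrix, Matrix.trace_diagonal]
  have hsum : (∑ v : Fin (K + 1) → Fin 2, G K h₁ β v) = Z K h₁ β := rfl
  rw [hsum]
  funext v w
  rw [Matrix.smul_apply, traceOut_diag h₁ β i hi v w, Matrix.add_apply, Matrix.smul_apply,
    Matrix.smul_apply, Matrix.one_apply]
  simp only [pauliAt]
  rw [if_pos (fun j hj => absurd (Subsingleton.elim j _) hj)]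
  by_cases hvw : v ⟨i, hi⟩ = w ⟨i, hi⟩
  · have hvw' : v = w := funext fun j => by
      rw [Subsingleton.elim j (⟨i, hi⟩ : {j : Fin (K + 1) // ¬ j ≠ i})]
      exact hvw
    rw [if_pos hvw, if_pos hvw', smul_eq_mul, smul_eq_mul, smul_eq_mul, ← hvw']
    have hσ : σz (v ⟨i, hi⟩) (v ⟨i, hi⟩) = sgn (v ⟨i, hi⟩) := by
      rw [σz_apply, if_pos rfl]
    rw [show (v (⟨↑i, by simp⟩ : {j : Fin (K + 1) // ¬ j ≠ i})) = v ⟨i, hi⟩ from rfl, hσ,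
      main_scalar h₁ β i]
    ring
  · have hvw' : v ≠ w := fun h => hvw (congrFun h _)
    rw [if_neg hvw, if_neg hvw', smul_eq_mul, smul_eq_mul, smul_eq_mul,
      σz_apply_ne (show v (⟨↑i, by simp⟩ : {j : Fin (K + 1) // ¬ j ≠ i})
        ≠ w ⟨↑i, by simp⟩ from hvw)]
    ring
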